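/- Let R = diag(1, −1) be reflection across the horizontal axis in ℝ². Then for all v, w ∈ ℝ², α_λ(R·v, R·w) = α_λ(v,w) and R · M_λ(v,w) = M_{−λ}(R·v, R·w) · R. Consequently, if K : (ℝ²)⁴ → ℝ² is R-equivariant, i.e. K(R·x, R·y, R·v, R·w) = R·K(x,y,v,w), and u is R-equivariant, i.e. u(R·x, R·v) = R·u(x,v), and (x_i, v_i)_{i=1..N} solves the anisotropic system with parameter λ, then the reflected trajectories (R·x_i, R·v_i)_{i=1..N} solve the anisotropic system with parameter −λ. (This expresses that changing the sign of λ interchanges the roles of the two groups under reflection, i.e. 'right-before-left' becomes 'left-before-right'.) -/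

import Mathlib

open Real MeasureTheory
open scoped Classical

noncomputable section

/-- The plane `ℝ²` with the Euclidean norm. -/
abbrev E2 : Type := EuclideanSpace ℝ (Fin 2)

/-- Interaction angle `α_λ(v,w)` with anisotropy parameter `λ`:
`α = λ · arccos (v⬝w / (‖v‖‖w‖))` if `v ≠ 0` and `w ≠ 0`, and `0` otherwise. -/
def iangle (lam : ℝ) (v w : E2) : ℝ :=
  if v ≠ 0 ∧ w ≠ 0 then lam * Real.arccos ((inner ℝ v w : ℝ) / (‖v‖ * ‖w‖)) else 0

/-- Rotation matrix `M_λ(v,w) = [[cos α, -sin α], [sin α, cos α]]`. -/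
def rotM (lam : ℝ) (v w : E2) : Matrix (Fin 2) (Fin 2) ℝ :=
  !![Real.cos (iangle lam v w), -Real.sin (iangle lam v w);
     Real.sin (iangle lam v w), Real.cos (iangle lam v w)]

/-- Apply a 2×2 matrix to a vector of `ℝ²`. -/
def apply2 (M : Matrix (Fin 2) (Fin 2) ℝ) (z : E2) : E2 :=
  Matrix.toEuclideanLin M z

/-- Reflection across the horizontal axis, `R = diag(1,-1)`. -/
def Rrefl : Matrix (Fin 2) (Fin 2) ℝ := !![1, 0; 0, -1]

lemma apply2_R0 (z : E2) : apply2 Rrefl z 0 = z 0 := by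
  simp [apply2, Matrix.toEuclideanLin_apply, Rrefl, Matrix.mulVec, dotProduct,
    Fin.sum_univ_two, WithLp.equiv]

lemma apply2_R1 (z : E2) : apply2 Rrefl z 1 = -z 1 := by
  simp [apply2, Matrix.toEuclideanLin_apply, Rrefl, Matrix.mulVec, dotProduct,
    Fin.sum_univ_two, WithLp.equiv]

lemma inner_R (v w : E2) :
    (inner ℝ (apply2 Rrefl v) (apply2 Rrefl w) : ℝ) = inner ℝ v w := by
  simp [PiLp.inner_apply, Fin.sum_univ_two, apply2_R0, apply2_R1]

lemma norm_R (v : E2) : ‖apply2 Rrefl v‖ = ‖v‖ := by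
  simp [EuclideanSpace.norm_eq, Fin.sum_univ_two, apply2_R0, apply2_R1]

lemma R_eq_zero (z : E2) : apply2 Rrefl z = 0 ↔ z = 0 := by
  constructor
  · intro h
    ext i
    fin_cases i
    · have := congrFun (congrArg (fun f : E2 => (f : Fin 2 → ℝ)) h) 0
      simpa [apply2_R0] using this
    · have := congrFun (congrArg (fun f : E2 => (f : Fin 2 → ℝ)) h) 1
      have h1 : -z 1 = 0 := by simpa [apply2_R1] using this
      simpa using neg_eq_zero.mp h1
  · intro h; subst h
    ext i
    fin_cases i
    · simp [apply2_R0]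
    · simp [apply2_R1]

lemma iangle_R (lam : ℝ) (v w : E2) :
    iangle lam (apply2 Rrefl v) (apply2 Rrefl w) = iangle lam v w := by
  unfold iangle
  rw [inner_R, norm_R, norm_R]
  simp only [ne_eq, R_eq_zero]

lemma iangle_neg (lam : ℝ) (v w : E2) : iangle (-lam) v w = -(iangle lam v w) := by
  unfold iangle
  by_cases h : v ≠ 0 ∧ w ≠ 0 <;> simp [h]

lemma rot_intertwine (lam : ℝ) (v w : E2) :
    Rrefl * rotM lam v w = rotM (-lam) (apply2 Rrefl v) (apply2 Rrefl w) * Rrefl := by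
  have h : iangle (-lam) (apply2 Rrefl v) (apply2 Rrefl w) = -(iangle lam v w) := by
    rw [iangle_R, iangle_neg]
  unfold rotM
  rw [h]
  simp [Rrefl, Matrix.mul_fin_two]

lemma apply2_mul (A B : Matrix (Fin 2) (Fin 2) ℝ) (z : E2) :
    apply2 (A * B) z = apply2 A (apply2 B z) := by
  simp [apply2, Matrix.toEuclideanLin_apply, Matrix.mulVec_mulVec]

lemma R_rot (lam : ℝ) (v w z : E2) :
    apply2 Rrefl (apply2 (rotM lam v w) z)
      = apply2 (rotM (-lam) (apply2 Rrefl v) (apply2 Rrefl w)) (apply2 Rrefl z) := by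
  rw [← apply2_mul, ← apply2_mul, rot_intertwine]

/-- `apply2 Rrefl` as a continuous linear map. -/
def RL : E2 →L[ℝ] E2 := LinearMap.toContinuousLinearMap (Matrix.toEuclideanLin Rrefl)

lemma RL_apply (z : E2) : RL z = apply2 Rrefl z := rfl

/-- Reflection invariance of the angle, intertwining relation `R·M_λ(v,w) = M_{-λ}(Rv,Rw)·R`,
and: reflected trajectories of a solution with parameter `λ` solve the system
with parameter `-λ` (for `R`-equivariant `u` and `K`). -/
theorem stmt_8 (lam : ℝ) (hlam : lam ∈ Set.Icc (-1 : ℝ) 1)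
    (N : ℕ) (u : E2 → E2 → E2) (K : E2 → E2 → E2 → E2 → E2)
    (hK : ∀ x y v w : E2,
      K (apply2 Rrefl x) (apply2 Rrefl y) (apply2 Rrefl v) (apply2 Rrefl w)
        = apply2 Rrefl (K x y v w))
    (hu : ∀ x v : E2, u (apply2 Rrefl x) (apply2 Rrefl v) = apply2 Rrefl (u x v))
    (x v : Fin N → ℝ → E2)
    (hx : ∀ i t, HasDerivAt (x i) (v i t) t)
    (hv : ∀ i t, HasDerivAt (v i)
      (u (x i t) (v i t) - (N : ℝ)⁻¹ • ∑ j ∈ Finset.univ.erase i,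
        apply2 (rotM lam (v i t) (v j t)) (K (x i t) (x j t) (v i t) (v j t))) t) :
    (∀ vv ww : E2,
      iangle lam (apply2 Rrefl vv) (apply2 Rrefl ww) = iangle lam vv ww) ∧
    (∀ vv ww : E2,
      Rrefl * rotM lam vv ww = rotM (-lam) (apply2 Rrefl vv) (apply2 Rrefl ww) * Rrefl) ∧
    (∀ i t, HasDerivAt (fun s => apply2 Rrefl (x i s)) (apply2 Rrefl (v i t)) t) ∧
    (∀ i t, HasDerivAt (fun s => apply2 Rrefl (v i s))
      (u (apply2 Rrefl (x i t)) (apply2 Rrefl (v i t)) -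
        (N : ℝ)⁻¹ • ∑ j ∈ Finset.univ.erase i,
          apply2 (rotM (-lam) (apply2 Rrefl (v i t)) (apply2 Rrefl (v j t)))
            (K (apply2 Rrefl (x i t)) (apply2 Rrefl (x j t))
               (apply2 Rrefl (v i t)) (apply2 Rrefl (v j t)))) t) := by
  refine ⟨fun vv ww => iangle_R lam vv ww, fun vv ww => rot_intertwine lam vv ww, ?_, ?_⟩
  · intro i t
    have := (RL.hasFDerivAt (x := x i t)).comp_hasDerivAt t (hx i t)
    simpa [RL_apply, Function.comp_def] using this
  · intro i t
    have h := (RL.hasFDerivAt (x := v i t)).comp_hasDerivAt t (hv i t)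
    have key : RL (u (x i t) (v i t) - (N : ℝ)⁻¹ • ∑ j ∈ Finset.univ.erase i,
        apply2 (rotM lam (v i t) (v j t)) (K (x i t) (x j t) (v i t) (v j t)))
      = u (apply2 Rrefl (x i t)) (apply2 Rrefl (v i t)) -
        (N : ℝ)⁻¹ • ∑ j ∈ Finset.univ.erase i,
          apply2 (rotM (-lam) (apply2 Rrefl (v i t)) (apply2 Rrefl (v j t)))
            (K (apply2 Rrefl (x i t)) (apply2 Rrefl (x j t))
               (apply2 Rrefl (v i t)) (apply2 Rrefl (v j t))) := by
      rw [RL.map_sub, RL.map_smul, map_sum]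
      congr 1
      · rw [RL_apply, hu]
      · congr 1
        refine Finset.sum_congr rfl fun j _ => ?_
        rw [RL_apply, R_rot, hK]
    rw [key] at h
    simpa [RL_apply, Function.comp_def] using h
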